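/- Let C₁, C₂ be two disjoint chains with chain-successor edges, and H a set of horizontal edges between them. Two horizontal edges h₁ = (u₁,v₁) with u₁ ∈ C₁, v₁ ∈ C₂ and h₂ = (u₂,v₂) with u₂ ∈ C₂, v₂ ∈ C₁ cross (i.e., create a directed cycle together with the chain edges) if and only if v₂ ≤ u₁ in the order of C₁ and v₁ ≤ u₂ in the order of C₂. -/

import Mathlib

/-- A directed simple cycle in the digraph given by relation `r`. -/
def IsCycle {V : Type*} (r : V → V → Prop) (l : List V) : Prop :=
  l ≠ [] ∧ l.Nodup ∧
    ∀ i : Fin l.length, r (l.get i) (l.get ⟨((i : ℕ) + 1) % l.length, Nat.mod_lt _ i.pos⟩)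

/-- Chain-successor edges of two disjoint chains `C₁ = Fin m` and `C₂ = Fin k`. -/
def chainEdge {m k : ℕ} : Fin m ⊕ Fin k → Fin m ⊕ Fin k → Prop
  | Sum.inl i, Sum.inl j => (i : ℕ) + 1 = (j : ℕ)
  | Sum.inr i, Sum.inr j => (i : ℕ) + 1 = (j : ℕ)
  | _, _ => False

lemma no_cycle_of_mono {V : Type*} {r : V → V → Prop} (φ : V → ℕ)
    (hφ : ∀ a b, r a b → φ a < φ b) : ∀ l, ¬ IsCycle r l := by
  rintro l ⟨hne, -, hstep⟩
  have hlen : 0 < l.length := List.length_pos_of_ne_nil hne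
  have key : ∀ i, (h : i < l.length) → φ (l.get ⟨0, hlen⟩) ≤ φ (l.get ⟨i, h⟩) := by
    intro i
    induction i with
    | zero => intro h; exact le_rfl
    | succ n ih =>
      intro h
      have hn : n < l.length := Nat.lt_of_succ_lt h
      have hs := hφ _ _ (hstep ⟨n, hn⟩)
      simp only [Nat.mod_eq_of_lt h] at hs
      exact le_trans (ih hn) (le_of_lt hs)
  have h1 : l.length - 1 < l.length := Nat.sub_lt hlen one_pos
  have hs := hφ _ _ (hstep ⟨l.length - 1, h1⟩)
  simp only [Nat.sub_add_cancel hlen, Nat.mod_self] at hs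
  exact absurd (key _ h1) (not_le.mpr hs)

lemma isCycle_range_map {V : Type*} (r : V → V → Prop) (f : ℕ → V) (n : ℕ) (hn : n ≠ 0)
    (hinj : ∀ x < n, ∀ y < n, f x = f y → x = y)
    (hstep : ∀ i < n, r (f i) (f ((i + 1) % n))) :
    IsCycle r ((List.range n).map f) := by
  have hL : ((List.range n).map f).length = n := by simp
  have hget : ∀ (j : ℕ) (hj : j < ((List.range n).map f).length),
      ((List.range n).map f).get ⟨j, hj⟩ = f j := by
    intro j hj
    simp
  refine ⟨?_, ?_, ?_⟩
  · apply List.ne_nil_of_length_pos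
    rw [hL]
    omega
  · exact List.Nodup.map_on
      (fun x hx y hy => hinj x (List.mem_range.mp hx) y (List.mem_range.mp hy))
      List.nodup_range
  · rintro ⟨j, hj⟩
    have h1 : j < n := by rw [hL] at hj; exact hj
    rw [hget, hget]
    dsimp only
    rw [hL]
    exact hstep _ h1

/-- the horizontal edges `h₁ = (u₁, v₁)` (from `C₁` to `C₂`) and
`h₂ = (u₂, v₂)` (from `C₂` to `C₁`) cross — i.e. the chain-successor edges plus
these two edges contain a directed cycle — if and only if `v₂ ≤ u₁` in the order
of `C₁` and `v₁ ≤ u₂` in the order of `C₂`. -/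
theorem crossing_characterization (m k : ℕ) (u₁ v₂ : Fin m) (v₁ u₂ : Fin k) :
    (∃ l : List (Fin m ⊕ Fin k),
      IsCycle (fun a b => chainEdge a b ∨
        (a, b) = ((Sum.inl u₁ : Fin m ⊕ Fin k), (Sum.inr v₁ : Fin m ⊕ Fin k)) ∨
        (a, b) = ((Sum.inr u₂ : Fin m ⊕ Fin k), (Sum.inl v₂ : Fin m ⊕ Fin k))) l)
    ↔ (v₂ ≤ u₁ ∧ v₁ ≤ u₂) := by
  have hu1 := u₁.isLt
  have hu2 := u₂.isLt
  have hv1 := v₁.isLt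
  have hv2 := v₂.isLt
  constructor
  · rintro ⟨l, hl⟩
    by_contra hcon
    rcases not_and_or.mp hcon with h | h <;> rw [not_le, Fin.lt_def] at h
    · -- u₁ < v₂ : strictly increasing potential, so no cycle
      refine no_cycle_of_mono
        (Sum.elim (fun i : Fin m => if i.val ≤ u₁.val then i.val else i.val + k + 1)
                  (fun j : Fin k => u₁.val + 1 + j.val)) ?_ l hl
      rintro a b (hab | hab | hab)
      · rcases a with i | i <;> rcases b with j | j <;> simp [chainEdge] at hab <;>
          simp only [Sum.elim_inl, Sum.elim_inr] <;>
            first | omega | (split_ifs <;> omega)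
      · rw [Prod.mk.injEq] at hab
        obtain ⟨rfl, rfl⟩ := hab
        simp only [Sum.elim_inl, Sum.elim_inr]
        first | omega | (split_ifs <;> omega)
      · rw [Prod.mk.injEq] at hab
        obtain ⟨rfl, rfl⟩ := hab
        simp only [Sum.elim_inl, Sum.elim_inr]
        first | omega | (split_ifs <;> omega)
    · -- u₂ < v₁ : strictly increasing potential, so no cycle
      refine no_cycle_of_mono
        (Sum.elim (fun i : Fin m => u₂.val + 1 + i.val)
                  (fun j : Fin k => if j.val ≤ u₂.val then j.val else j.val + m + 1)) ?_ l hl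
      rintro a b (hab | hab | hab)
      · rcases a with i | i <;> rcases b with j | j <;> simp [chainEdge] at hab <;>
          simp only [Sum.elim_inl, Sum.elim_inr] <;>
            first | omega | (split_ifs <;> omega)
      · rw [Prod.mk.injEq] at hab
        obtain ⟨rfl, rfl⟩ := hab
        simp only [Sum.elim_inl, Sum.elim_inr]
        first | omega | (split_ifs <;> omega)
      · rw [Prod.mk.injEq] at hab
        obtain ⟨rfl, rfl⟩ := hab
        simp only [Sum.elim_inl, Sum.elim_inr]
        first | omega | (split_ifs <;> omega)
  · rintro ⟨h1, h2⟩
    have h1' : v₂.val ≤ u₁.val := h1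
    have h2' : v₁.val ≤ u₂.val := h2
    refine ⟨_, isCycle_range_map _
      (fun t => if t < u₁.val - v₂.val + 1
        then Sum.inl ⟨(v₂.val + t) % m, Nat.mod_lt _ (by omega)⟩
        else Sum.inr ⟨(v₁.val + (t - (u₁.val - v₂.val + 1))) % k, Nat.mod_lt _ (by omega)⟩)
      ((u₁.val - v₂.val + 1) + (u₂.val - v₁.val + 1)) (by omega) ?_ ?_⟩
    · intro x hx y hy hxy
      by_cases h : x < u₁.val - v₂.val + 1
      · by_cases h' : y < u₁.val - v₂.val + 1
        · rw [if_pos h, if_pos h'] at hxy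
          simp only [Sum.inl.injEq, Fin.mk.injEq] at hxy
          rw [Nat.mod_eq_of_lt (by omega), Nat.mod_eq_of_lt (by omega)] at hxy
          omega
        · rw [if_pos h, if_neg h'] at hxy
          exact absurd hxy (by simp)
      · by_cases h' : y < u₁.val - v₂.val + 1
        · rw [if_neg h, if_pos h'] at hxy
          exact absurd hxy (by simp)
        · rw [if_neg h, if_neg h'] at hxy
          simp only [Sum.inr.injEq, Fin.mk.injEq] at hxy
          rw [Nat.mod_eq_of_lt (by omega), Nat.mod_eq_of_lt (by omega)] at hxy
          omega
    · intro n hn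
      rcases Nat.lt_or_ge (n + 1) (u₁.val - v₂.val + 1) with hc | hc
      · -- interior of first block: chain edge in C₁
        rw [Nat.mod_eq_of_lt (show n + 1 < _ by omega)]
        split_ifs
        all_goals first
          | omega
          | (left; show _ + 1 = _; dsimp only;
             rw [Nat.mod_eq_of_lt (by omega), Nat.mod_eq_of_lt (by omega)]; omega)
      rcases Nat.eq_or_lt_of_le hc with hc' | hc'
      · -- n + 1 = p : horizontal edge inl u₁ → inr v₁
        rw [Nat.mod_eq_of_lt (show n + 1 < _ by omega)]
        split_ifs
        all_goals first
          | omega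
          | (right; left;
             simp only [Prod.mk.injEq, Sum.inl.injEq, Sum.inr.injEq];
             constructor <;> (apply Fin.ext; dsimp only; rw [Nat.mod_eq_of_lt (by omega)]; omega))
      rcases Nat.lt_or_ge (n + 1) ((u₁.val - v₂.val + 1) + (u₂.val - v₁.val + 1)) with hd | hd
      · -- interior of second block: chain edge in C₂
        rw [Nat.mod_eq_of_lt (show n + 1 < _ by omega)]
        split_ifs
        all_goals first
          | omega
          | (left; show _ + 1 = _; dsimp only;
             rw [Nat.mod_eq_of_lt (by omega), Nat.mod_eq_of_lt (by omega)]; omega)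
      · -- wrap around: horizontal edge inr u₂ → inl v₂
        have hz : n + 1 = (u₁.val - v₂.val + 1) + (u₂.val - v₁.val + 1) := by omega
        rw [hz, Nat.mod_self]
        split_ifs
        all_goals first
          | omega
          | (right; right;
             simp only [Prod.mk.injEq, Sum.inl.injEq, Sum.inr.injEq];
             constructor <;> (apply Fin.ext; dsimp only; rw [Nat.mod_eq_of_lt (by omega)]; omega))
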